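/- Fix p ∈ (1, 2). For all sufficiently small c > 0, setting r = c − (pc)^{p/(2−p)}, we have 0 < r < c, c + r < 1, and the closed disk of radius r centered at (0, c) is contained in K_p = {(x, y) ∈ ℝ²: |x|^p ≤ y ≤ 1}. -/

import Mathlib

/-- Lemma 3.12: for `1 < p < 2` and sufficiently small `c > 0`, with
`r = c − (pc)^{p/(2−p)}`, one has `0 < r < c`, `c + r < 1`, and the closed disk of
radius `r` centered at `(0, c)` is contained in `K_p = {(x,y) : |x|^p ≤ y ≤ 1}`. -/
theorem stmt_14 (p : ℝ) (hp1 : 1 < p) (hp2 : p < 2) :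
    ∃ c₀ > (0 : ℝ), ∀ c : ℝ, 0 < c → c < c₀ →
      0 < c - (p * c) ^ (p / (2 - p)) ∧
      c - (p * c) ^ (p / (2 - p)) < c ∧
      c + (c - (p * c) ^ (p / (2 - p))) < 1 ∧
      {q : ℝ × ℝ | q.1 ^ 2 + (q.2 - c) ^ 2 ≤ (c - (p * c) ^ (p / (2 - p))) ^ 2} ⊆
        {q : ℝ × ℝ | |q.1| ^ p ≤ q.2 ∧ q.2 ≤ 1} := by
  have hp0 : (0:ℝ) < p := by linarith
  have h2p : (0:ℝ) < 2 - p := by linarith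
  set s : ℝ := p / (2 - p) with hs_def
  have hs1 : 1 < s := (one_lt_div h2p).mpr (by linarith)
  have hs0 : 0 < s - 1 := by linarith
  refine ⟨min (1/2) ((p ^ (-s)) ^ (s-1)⁻¹), lt_min (by norm_num)
    (Real.rpow_pos_of_pos (Real.rpow_pos_of_pos hp0 _) _), ?_⟩
  intro c hc hcc
  have hc2 : c < 1/2 := hcc.trans_le (min_le_left _ _)
  have hcP : c < (p ^ (-s)) ^ (s-1)⁻¹ := hcc.trans_le (min_le_right _ _)
  set δ : ℝ := (p * c) ^ s with hδ_def
  have hpc : 0 < p * c := mul_pos hp0 hc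
  have hδ0 : 0 < δ := Real.rpow_pos_of_pos hpc _
  -- δ < c
  have hδc : δ < c := by
    have h1 : c ^ (s - 1) < p ^ (-s) := by
      have := Real.rpow_lt_rpow hc.le hcP hs0
      rwa [Real.rpow_inv_rpow (Real.rpow_pos_of_pos hp0 _).le (ne_of_gt hs0)] at this
    have h2 : δ = p ^ s * (c ^ (s-1) * c) := by
      rw [hδ_def, Real.mul_rpow hp0.le hc.le]
      congr 1
      rw [← Real.rpow_add_one hc.ne' (s-1), show s - 1 + 1 = s by ring]
    have h3 : p ^ s * (c ^ (s-1) * c) < p ^ s * (p ^ (-s) * c) := by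
      have hps : (0:ℝ) < p ^ s := Real.rpow_pos_of_pos hp0 _
      have := mul_lt_mul_of_pos_right h1 hc
      exact mul_lt_mul_of_pos_left this hps
    have h4 : p ^ s * (p ^ (-s) * c) = c := by
      rw [← mul_assoc, ← Real.rpow_add hp0]
      norm_num
    rw [h2]; rw [h4] at h3; exact h3
  refine ⟨by linarith, by linarith, by linarith, ?_⟩
  rintro ⟨x, y⟩ hxy
  simp only [Set.mem_setOf_eq] at hxy ⊢
  set r : ℝ := c - δ with hr_def
  have hr0 : 0 < r := by linarith
  have hyδ : δ ≤ y := by nlinarith [sq_nonneg x, sq_nonneg (y - c + r)]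
  have hy1 : y ≤ c + r := by nlinarith [sq_nonneg x, sq_nonneg (y - c - r)]
  have hy0 : 0 < y := lt_of_lt_of_le hδ0 hyδ
  -- x^2 ≤ 2c(y - δ)
  have hx2 : x ^ 2 ≤ 2 * c * (y - δ) := by nlinarith
  -- Bernoulli: δ^(2/p) + 2c(y-δ) ≤ y^(2/p)
  have hq1 : (1:ℝ) ≤ 2 / p := (one_le_div hp0).mpr hp2.le
  have hber : δ ^ (2/p) + 2 * c * (y - δ) ≤ y ^ (2/p) := by
    have ht : (-1:ℝ) ≤ (y - δ) / δ := by
      have : 0 ≤ (y - δ) / δ := div_nonneg (by linarith) hδ0.le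
      linarith
    have hB := one_add_mul_self_le_rpow_one_add ht hq1
    have hδq : 0 < δ ^ (2/p) := Real.rpow_pos_of_pos hδ0 _
    have hmul := mul_le_mul_of_nonneg_left hB hδq.le
    have h1p : (1:ℝ) + (y - δ)/δ = y / δ := by field_simp; ring
    rw [h1p] at hmul
    have hyq : δ ^ (2/p) * (y/δ) ^ (2/p) = y ^ (2/p) := by
      rw [← Real.mul_rpow hδ0.le (div_nonneg hy0.le hδ0.le)]
      congr 1
      field_simp
    rw [hyq] at hmul
    -- δ^(2/p) * (1 + (2/p) * ((y-δ)/δ)) = δ^(2/p) + 2c(y-δ)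
    have hδexp : δ ^ (2/p) / δ = p * c := by
      have h5 : δ ^ (2/p) / δ = (p*c) ^ (s * (2/p) - s) := by
        rw [hδ_def, ← Real.rpow_mul hpc.le, ← Real.rpow_sub hpc]
      rw [h5, show s * (2/p) - s = 1 by rw [hs_def]; field_simp, Real.rpow_one]
    have key : δ ^ (2/p) * (1 + 2/p * ((y - δ)/δ)) = δ ^ (2/p) + 2 * c * (y - δ) := by
      have : δ ^ (2/p) * (2/p * ((y - δ)/δ)) = 2/p * (δ ^ (2/p) / δ) * (y - δ) := by
        field_simp
      rw [mul_add, mul_one, this, hδexp]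
      have : 2 / p * (p * c) = 2 * c := by field_simp
      rw [this]
    rw [key] at hmul
    exact hmul
  have hxq : x ^ 2 ≤ y ^ (2/p) := by
    have hδq : 0 < δ ^ (2/p) := Real.rpow_pos_of_pos hδ0 _
    linarith
  -- conclude |x|^p ≤ y
  have habs : |x| ≤ y ^ (1/p) := by
    have h2 : x ^ 2 ≤ (y ^ (1/p)) ^ 2 := by
      rw [← Real.rpow_natCast (y ^ (1/p)) 2, ← Real.rpow_mul hy0.le]
      norm_num
      rw [show p⁻¹ * 2 = 2/p by field_simp]
      exact hxq
    calc |x| = Real.sqrt (x ^ 2) := (Real.sqrt_sq_eq_abs x).symm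
      _ ≤ Real.sqrt ((y ^ (1/p)) ^ 2) := Real.sqrt_le_sqrt h2
      _ = y ^ (1/p) := by
          rw [Real.sqrt_sq (Real.rpow_nonneg hy0.le _)]
  constructor
  · have := Real.rpow_le_rpow (abs_nonneg x) habs hp0.le
    rwa [← Real.rpow_mul hy0.le,
      show (1/p) * p = 1 by field_simp, Real.rpow_one] at this
  · linarith
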